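/- Let A be a finitely generated commutative monoid. Then the set of prime ideals of A (the spectrum spec(A)) is finite. -/

import Mathlib

/-- The set of prime ideals of a finitely generated commutative monoid is finite. -/
theorem stmt_13 (A : Type*) [CommMonoid A] [Monoid.FG A] :
    {p : Set A | (∀ a x, x ∈ p → a * x ∈ p) ∧ (1 ∉ p) ∧
      (∀ x y, x ∉ p → y ∉ p → x * y ∉ p)}.Finite := by
  obtain ⟨S, hS⟩ := (Monoid.fg_def.mp ‹Monoid.FG A›)
  have key : ∀ p q : Set A,
      p ∈ {p : Set A | (∀ a x, x ∈ p → a * x ∈ p) ∧ (1 ∉ p) ∧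
        (∀ x y, x ∉ p → y ∉ p → x * y ∉ p)} →
      q ∈ {p : Set A | (∀ a x, x ∈ p → a * x ∈ p) ∧ (1 ∉ p) ∧
        (∀ x y, x ∉ p → y ∉ p → x * y ∉ p)} →
      p ∩ ↑S = q ∩ ↑S → p ⊆ q := by
    intro p q ⟨hpI, hp1, hpP⟩ ⟨hqI, hq1, hqP⟩ hEq x hx
    have hxcl : x ∈ Submonoid.closure (↑S : Set A) := by rw [hS]; trivial
    have : x ∈ p ↔ x ∈ q := by
      refine Submonoid.closure_induction (motive := fun x _ => (x ∈ p ↔ x ∈ q)) ?_ ?_ ?_ hxcl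
      · intro y hy
        constructor
        · intro h; exact (Set.ext_iff.mp hEq y).mp ⟨h, hy⟩ |>.1
        · intro h; exact (Set.ext_iff.mp hEq y).mpr ⟨h, hy⟩ |>.1
      · simp [hp1, hq1]
      · intro a b _ _ ha hb
        have hsplit : ∀ (r : Set A), (∀ a x, x ∈ r → a * x ∈ r) →
            (∀ x y, x ∉ r → y ∉ r → x * y ∉ r) → (a * b ∈ r ↔ a ∈ r ∨ b ∈ r) := by
          intro r hrI hrP
          constructor
          · intro h
            by_contra hc
            push_neg at hc
            exact hrP a b hc.1 hc.2 h
          · rintro (h | h)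
            · rw [mul_comm]; exact hrI b a h
            · exact hrI a b h
        rw [hsplit p hpI hpP, hsplit q hqI hqP, ha, hb]
    exact this.mp hx
  have hinj : Set.InjOn (fun p => p ∩ (↑S : Set A))
      {p : Set A | (∀ a x, x ∈ p → a * x ∈ p) ∧ (1 ∉ p) ∧
        (∀ x y, x ∉ p → y ∉ p → x * y ∉ p)} := by
    intro p hp q hq h
    exact Set.Subset.antisymm (key p q hp hq h) (key q p hq hp h.symm)
  have hfin : ((fun p => p ∩ (↑S : Set A)) ''
      {p : Set A | (∀ a x, x ∈ p → a * x ∈ p) ∧ (1 ∉ p) ∧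
        (∀ x y, x ∉ p → y ∉ p → x * y ∉ p)}).Finite := by
    apply Set.Finite.subset (S.finite_toSet.finite_subsets)
    rintro t ⟨p, _, rfl⟩
    exact Set.inter_subset_right
  exact Set.Finite.of_finite_image hfin hinj
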